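/- arXiv:2509.22888 — 4 statements merged into one kernel-verified Lean document; each statement's English description precedes it below -/
import Mathlib

section
/- There exist a dimension d ≥ 2 and vectors E_{M1}, E_{M2}, E_{Q1}, E_{Q2} in ℝ^d with E_{Q1} ≠ 0 and E_{Q2} ≠ 0 such that Θ(M1,Q1) > Θ(M2,Q1) and Θ(M2,Q2) > Θ(M1,Q2); that is, in the JE-IRT framework there is no global ordering of model ability scores across questions. -/
/-- Ability score of a model with embedding `EM` on a question with embedding `EQ`:
`Θ(M,Q) = (E_Q ⋅ E_M)/‖E_Q‖`. -/
noncomputable def ability {d : ℕ} (EM EQ : EuclideanSpace ℝ (Fin d)) : ℝ :=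
  (inner ℝ EQ EM : ℝ) / ‖EQ‖

/-- No global ordering of model ability scores across questions in JE-IRT. -/
theorem no_global_ability_ordering :
    ∃ (d : ℕ), 2 ≤ d ∧
      ∃ (EM1 EM2 EQ1 EQ2 : EuclideanSpace ℝ (Fin d)),
        EQ1 ≠ 0 ∧ EQ2 ≠ 0 ∧
        ability EM1 EQ1 > ability EM2 EQ1 ∧
        ability EM2 EQ2 > ability EM1 EQ2 := by
  refine ⟨2, le_refl 2, EuclideanSpace.single 0 1, EuclideanSpace.single 1 1,
    EuclideanSpace.single 0 1, EuclideanSpace.single 1 1, ?_, ?_, ?_, ?_⟩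
  · intro h
    have := congrFun (congrArg (fun v : EuclideanSpace ℝ (Fin 2) => (v : Fin 2 → ℝ)) h) 0
    simp [EuclideanSpace.single] at this
  · intro h
    have := congrFun (congrArg (fun v : EuclideanSpace ℝ (Fin 2) => (v : Fin 2 → ℝ)) h) 1
    simp [EuclideanSpace.single] at this
  · simp [ability, EuclideanSpace.inner_single_left, EuclideanSpace.single_apply,
      EuclideanSpace.norm_single]
  · simp [ability, EuclideanSpace.inner_single_left, EuclideanSpace.single_apply,
      EuclideanSpace.norm_single]
end

section
/- (Bounded Ability Shift for Similar Questions.) Let E_M be a vector in ℝ^d and let E_{Q1}, E_{Q2} be nonzero vectors in ℝ^d with cos(E_{Q1}, E_{Q2}) = 1 − ε for some ε > 0. Then |Θ(M,Q1) − Θ(M,Q2)| ≤ √(2ε) · ‖E_M‖. -/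
/-- Cosine similarity `cos(u,v) = (u ⋅ v)/(‖u‖‖v‖)`. -/
noncomputable def cosSim {d : ℕ} (u v : EuclideanSpace ℝ (Fin d)) : ℝ :=
  (inner ℝ u v : ℝ) / (‖u‖ * ‖v‖)

/-- Bounded Ability Shift for Similar Questions. -/
theorem bounded_ability_shift {d : ℕ}
    (EM EQ1 EQ2 : EuclideanSpace ℝ (Fin d)) (hQ1 : EQ1 ≠ 0) (hQ2 : EQ2 ≠ 0)
    (ε : ℝ) (hε : 0 < ε) (hcos : cosSim EQ1 EQ2 = 1 - ε) :
    |ability EM EQ1 - ability EM EQ2| ≤ Real.sqrt (2 * ε) * ‖EM‖ := by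
  set e1 : EuclideanSpace ℝ (Fin d) := ‖EQ1‖⁻¹ • EQ1 with he1
  set e2 : EuclideanSpace ℝ (Fin d) := ‖EQ2‖⁻¹ • EQ2 with he2
  have h1 : ‖EQ1‖ ≠ 0 := norm_ne_zero_iff.mpr hQ1
  have h2 : ‖EQ2‖ ≠ 0 := norm_ne_zero_iff.mpr hQ2
  have hn1 : ‖e1‖ = 1 := by
    rw [he1, norm_smul, norm_inv, norm_norm, inv_mul_cancel₀ h1]
  have hn2 : ‖e2‖ = 1 := by
    rw [he2, norm_smul, norm_inv, norm_norm, inv_mul_cancel₀ h2]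
  have ha1 : ability EM EQ1 = (inner ℝ e1 EM : ℝ) := by
    rw [he1, real_inner_smul_left, ability, div_eq_inv_mul]
  have ha2 : ability EM EQ2 = (inner ℝ e2 EM : ℝ) := by
    rw [he2, real_inner_smul_left, ability, div_eq_inv_mul]
  have hinner : (inner ℝ e1 e2 : ℝ) = 1 - ε := by
    rw [he1, he2, real_inner_smul_left, real_inner_smul_right]
    rw [cosSim] at hcos
    field_simp at hcos ⊢
    rw [mul_comm] at hcos
    linarith [hcos]
  have hsq : ‖e1 - e2‖ ^ 2 = 2 * ε := by
    rw [norm_sub_sq_real, hn1, hn2, hinner]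
    ring
  have hnorm : ‖e1 - e2‖ = Real.sqrt (2 * ε) := by
    rw [← hsq, Real.sqrt_sq (norm_nonneg _)]
  calc |ability EM EQ1 - ability EM EQ2| = |(inner ℝ (e1 - e2) EM : ℝ)| := by
        rw [ha1, ha2, inner_sub_left]
    _ ≤ ‖e1 - e2‖ * ‖EM‖ := abs_real_inner_le_norm _ _
    _ = Real.sqrt (2 * ε) * ‖EM‖ := by rw [hnorm]
end

section
/- (Stability of Predicted Probabilities Under Similar Questions.) Let E_M be a vector in ℝ^d and let E_{Q1}, E_{Q2} be nonzero vectors in ℝ^d with cos(E_{Q1}, E_{Q2}) = 1 − ε for some ε > 0. Then |P(M,Q1) − P(M,Q2)| ≤ (1/4)·(√(2ε)·‖E_M‖ + |‖E_{Q1}‖ − ‖E_{Q2}‖|). -/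
/-- The logistic sigmoid `σ(t) = 1/(1 + e^{-t})`. -/
noncomputable def sigmoid (t : ℝ) : ℝ := 1 / (1 + Real.exp (-t))

/-- Predicted correctness probability `P(M,Q) = σ(Θ(M,Q) - ‖E_Q‖)`. -/
noncomputable def predProb {d : ℕ} (EM EQ : EuclideanSpace ℝ (Fin d)) : ℝ :=
  sigmoid (ability EM EQ - ‖EQ‖)

lemma sigmoid_hasDerivAt (t : ℝ) :
    HasDerivAt sigmoid (Real.exp (-t) / (1 + Real.exp (-t))^2) t := by
  have h1 : HasDerivAt (fun t : ℝ => 1 + Real.exp (-t)) (-Real.exp (-t)) t := by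
    have := (Real.hasDerivAt_exp (-t)).comp t (hasDerivAt_neg t)
    simpa using (this.const_add 1)
  have hne : (1 : ℝ) + Real.exp (-t) ≠ 0 := by positivity
  have h2 := h1.inv hne
  have : sigmoid = fun t : ℝ => (1 + Real.exp (-t))⁻¹ := by
    funext x; simp [sigmoid, one_div]
  rw [this]
  rw [neg_neg] at h2
  exact h2

lemma sigmoid_lipschitz (a b : ℝ) : |sigmoid a - sigmoid b| ≤ (1/4) * |a - b| := by
  have key : ∀ x ∈ (Set.univ : Set ℝ), ‖deriv sigmoid x‖ ≤ (1/4 : ℝ) := by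
    intro x _
    rw [(sigmoid_hasDerivAt x).deriv]
    have hx : 0 < Real.exp (-x) := Real.exp_pos _
    rw [Real.norm_eq_abs, abs_of_nonneg (by positivity)]
    rw [div_le_iff₀ (by positivity)]
    nlinarith [sq_nonneg (1 - Real.exp (-x))]
  have hdiff : ∀ x ∈ (Set.univ : Set ℝ), DifferentiableAt ℝ sigmoid x :=
    fun x _ => (sigmoid_hasDerivAt x).differentiableAt
  have := convex_univ.norm_image_sub_le_of_norm_deriv_le hdiff key
    (Set.mem_univ b) (Set.mem_univ a)
  simpa [Real.norm_eq_abs] using this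

/-- Stability of Predicted Probabilities Under Similar Questions. -/
theorem predProb_stability {d : ℕ}
    (EM EQ1 EQ2 : EuclideanSpace ℝ (Fin d)) (hQ1 : EQ1 ≠ 0) (hQ2 : EQ2 ≠ 0)
    (ε : ℝ) (hε : 0 < ε) (hcos : cosSim EQ1 EQ2 = 1 - ε) :
    |predProb EM EQ1 - predProb EM EQ2| ≤
      (1 / 4) * (Real.sqrt (2 * ε) * ‖EM‖ + |‖EQ1‖ - ‖EQ2‖|) := by
  have hn1 : ‖EQ1‖ ≠ 0 := norm_ne_zero_iff.mpr hQ1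
  have hn2 : ‖EQ2‖ ≠ 0 := norm_ne_zero_iff.mpr hQ2
  set u1 : EuclideanSpace ℝ (Fin d) := ‖EQ1‖⁻¹ • EQ1 with hu1
  set u2 : EuclideanSpace ℝ (Fin d) := ‖EQ2‖⁻¹ • EQ2 with hu2
  have hnu1 : ‖u1‖ = 1 := by rw [hu1, norm_smul]; simp [abs_of_nonneg (norm_nonneg EQ1), hn1]
  have hnu2 : ‖u2‖ = 1 := by rw [hu2, norm_smul]; simp [abs_of_nonneg (norm_nonneg EQ2), hn2]
  have habil1 : ability EM EQ1 = (inner ℝ u1 EM : ℝ) := by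
    rw [hu1, real_inner_smul_left, ability, div_eq_inv_mul]
  have habil2 : ability EM EQ2 = (inner ℝ u2 EM : ℝ) := by
    rw [hu2, real_inner_smul_left, ability, div_eq_inv_mul]
  have hinner12 : (inner ℝ u1 u2 : ℝ) = 1 - ε := by
    rw [hu1, hu2, real_inner_smul_left, real_inner_smul_right, ← hcos, cosSim]
    field_simp
  have hsq : ‖u1 - u2‖^2 = 2 * ε := by
    rw [← real_inner_self_eq_norm_sq]
    rw [inner_sub_sub_self]
    have h21 : (inner ℝ u2 u1 : ℝ) = 1 - ε := by rw [real_inner_comm]; exact hinner12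
    rw [real_inner_self_eq_norm_sq, real_inner_self_eq_norm_sq, hnu1, hnu2]
    simp only [hinner12, h21]
    ring
  have hnorm : ‖u1 - u2‖ = Real.sqrt (2 * ε) := by
    rw [← hsq, Real.sqrt_sq (norm_nonneg _)]
  have hdiff_abil : |ability EM EQ1 - ability EM EQ2| ≤ Real.sqrt (2 * ε) * ‖EM‖ := by
    rw [habil1, habil2, ← inner_sub_left, ← hnorm]
    exact abs_real_inner_le_norm _ _
  calc |predProb EM EQ1 - predProb EM EQ2|
      ≤ (1/4) * |(ability EM EQ1 - ‖EQ1‖) - (ability EM EQ2 - ‖EQ2‖)| :=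
        sigmoid_lipschitz _ _
    _ ≤ (1/4) * (|ability EM EQ1 - ability EM EQ2| + |‖EQ1‖ - ‖EQ2‖|) := by
        gcongr
        have : (ability EM EQ1 - ‖EQ1‖) - (ability EM EQ2 - ‖EQ2‖)
            = (ability EM EQ1 - ability EM EQ2) + -(‖EQ1‖ - ‖EQ2‖) := by ring
        rw [this]
        exact (abs_add_le _ _).trans (by rw [abs_neg])
    _ ≤ (1 / 4) * (Real.sqrt (2 * ε) * ‖EM‖ + |‖EQ1‖ - ‖EQ2‖|) := by
        gcongr
end

section
/- Let E_M be a vector in ℝ^d and let E_{Q1}, E_{Q2} be nonzero vectors in ℝ^d with cos(E_{Q1}, E_{Q2}) = 1 − ε for some ε > 0 and with equal norms ‖E_{Q1}‖ = ‖E_{Q2}‖. Then |P(M,Q1) − P(M,Q2)| ≤ (1/4)·√(2ε)·‖E_M‖. -/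
lemma sigmoid_deriv_bound (t : ℝ) : Real.exp (-t) / (1 + Real.exp (-t))^2 ≤ 1/4 := by
  have hx : 0 < Real.exp (-t) := Real.exp_pos _
  have h : 4 * Real.exp (-t) ≤ (1 + Real.exp (-t))^2 := by nlinarith [sq_nonneg (1 - Real.exp (-t))]
  rw [div_le_iff₀ (by positivity)]
  nlinarith

theorem predProb_stability_equal_norms {d : ℕ}
    (EM EQ1 EQ2 : EuclideanSpace ℝ (Fin d)) (hQ1 : EQ1 ≠ 0) (hQ2 : EQ2 ≠ 0)
    (ε : ℝ) (hε : 0 < ε) (hcos : cosSim EQ1 EQ2 = 1 - ε)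
    (hnorm : ‖EQ1‖ = ‖EQ2‖) :
    |predProb EM EQ1 - predProb EM EQ2| ≤
      (1 / 4) * Real.sqrt (2 * ε) * ‖EM‖ := by
  have hr : 0 < ‖EQ1‖ := norm_pos_iff.mpr hQ1
  set r := ‖EQ1‖ with hrdef
  have hinner : (inner ℝ EQ1 EQ2 : ℝ) = (1 - ε) * (r * r) := by
    have h := hcos
    unfold cosSim at h
    rw [← hnorm] at h
    have hne : r * r ≠ 0 := by positivity
    rw [div_eq_iff hne] at h
    linarith [h]
  have hsub : ‖EQ1 - EQ2‖^2 = 2 * ε * r^2 := by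
    have := @norm_sub_sq_real (EuclideanSpace ℝ (Fin d)) _ _ EQ1 EQ2
    rw [this, hinner, ← hnorm]
    ring
  have hsubnorm : ‖EQ1 - EQ2‖ = Real.sqrt (2 * ε) * r := by
    have h1 : (0:ℝ) ≤ ‖EQ1 - EQ2‖ := norm_nonneg _
    have h2 : (0:ℝ) ≤ Real.sqrt (2 * ε) * r := by positivity
    nlinarith [Real.sq_sqrt (by positivity : (0:ℝ) ≤ 2 * ε), sq_nonneg (‖EQ1 - EQ2‖ - Real.sqrt (2*ε) * r)]
  have habdiff : |ability EM EQ1 - ability EM EQ2| ≤ Real.sqrt (2 * ε) * ‖EM‖ := by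
    have : ability EM EQ1 - ability EM EQ2 = (inner ℝ (EQ1 - EQ2) EM : ℝ) / r := by
      simp [ability, ← hnorm, inner_sub_left]
      ring
    rw [this, abs_div, abs_of_pos hr]
    rw [div_le_iff₀ hr]
    calc |(inner ℝ (EQ1 - EQ2) EM : ℝ)| ≤ ‖EQ1 - EQ2‖ * ‖EM‖ := abs_real_inner_le_norm _ _
      _ = Real.sqrt (2 * ε) * ‖EM‖ * r := by rw [hsubnorm]; ring
  have key : |predProb EM EQ1 - predProb EM EQ2| ≤
      (1/4) * |ability EM EQ1 - ability EM EQ2| := by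
    have h := sigmoid_lipschitz (ability EM EQ1 - ‖EQ1‖) (ability EM EQ2 - ‖EQ2‖)
    have e : ability EM EQ1 - ‖EQ1‖ - (ability EM EQ2 - ‖EQ2‖)
        = ability EM EQ1 - ability EM EQ2 := by rw [show ‖EQ1‖ = ‖EQ2‖ from hnorm]; ring
    rw [e] at h
    simpa [predProb] using h
  calc |predProb EM EQ1 - predProb EM EQ2|
      ≤ (1/4) * |ability EM EQ1 - ability EM EQ2| := key
    _ ≤ (1/4) * (Real.sqrt (2 * ε) * ‖EM‖) := by linarith
    _ = (1/4) * Real.sqrt (2 * ε) * ‖EM‖ := by ring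
end
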